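/- Gradient of the loss with respect to the constraint matrix entry: in the setting of the differentiable QP above, for a loss ℓ(x(θ)) and the adjoint pair (x̃, ξ̃) solving [[C, F^T],[F, 0]] [x̃; ξ̃] = [-∇_x ℓ; 0], the derivative of ℓ with respect to the (i,j) entry of F equals ξ_i x̃_j + ξ̃_i x_j. -/

import Mathlib

open Matrix

theorem qp_gradient_wrt_constraint_entry {n m : ℕ}
    (C : Matrix (Fin n) (Fin n) ℝ) (F : Matrix (Fin m) (Fin n) ℝ) (b : Fin m → ℝ)
    (hC : C.PosDef) (hF : Function.Surjective F.mulVec)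
    (i : Fin m) (j : Fin n)
    (x : ℝ → Fin n → ℝ) (ξ : ℝ → Fin m → ℝ)
    (x' : Fin n → ℝ) (ξ' : Fin m → ℝ)
    (hxd : HasDerivAt x x' 0) (hξd : HasDerivAt ξ ξ' 0)
    (hkkt : ∀ θ : ℝ,
      C *ᵥ x θ + (F + θ • single i j 1)ᵀ *ᵥ ξ θ = 0 ∧
      (F + θ • single i j 1) *ᵥ x θ = b)
    (ℓ : (Fin n → ℝ) → ℝ) (g : Fin n → ℝ) (l' : (Fin n → ℝ) →L[ℝ] ℝ)
    (hl : HasFDerivAt ℓ l' (x 0)) (hg : ∀ v, l' v = g ⬝ᵥ v)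
    (xt : Fin n → ℝ) (ξt : Fin m → ℝ)
    (hadj1 : C *ᵥ xt + Fᵀ *ᵥ ξt = -g) (hadj2 : F *ᵥ xt = 0) :
    HasDerivAt (fun θ => ℓ (x θ)) (ξ 0 i * xt j + ξt i * x 0 j) 0 := by
  set E : Matrix (Fin m) (Fin n) ℝ := single i j 1 with hE
  have hx'c : ∀ l, HasDerivAt (fun θ => x θ l) (x' l) 0 := hasDerivAt_pi.mp hxd
  have hξ'c : ∀ l, HasDerivAt (fun θ => ξ θ l) (ξ' l) 0 := hasDerivAt_pi.mp hξd
  -- differentiate the first KKT equation componentwise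
  have heq1 : C *ᵥ x' + Fᵀ *ᵥ ξ' + Eᵀ *ᵥ ξ 0 = 0 := by
    funext k
    have hD : HasDerivAt
        (fun θ : ℝ => (∑ l, C k l * x θ l) + ∑ l, (F l k + θ * E l k) * ξ θ l)
        ((∑ l, C k l * x' l) + ∑ l, (E l k * ξ 0 l + (F l k + 0 * E l k) * ξ' l)) 0 := by
      apply HasDerivAt.add
      · exact HasDerivAt.fun_sum fun l _ => (hx'c l).const_mul (C k l)
      · refine HasDerivAt.fun_sum fun l _ => ?_
        have := ((hasDerivAt_const (0:ℝ) (F l k)).add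
          ((hasDerivAt_id (0:ℝ)).mul_const (E l k))).mul (hξ'c l)
        simpa [Pi.add_def, Pi.mul_def] using this
    have hconst : (fun θ : ℝ => (∑ l, C k l * x θ l) + ∑ l, (F l k + θ * E l k) * ξ θ l)
        = fun _ => (0:ℝ) := by
      funext θ
      have h := (hkkt θ).1
      have h' := congrFun h k
      simpa [mulVec, dotProduct, transpose_apply, Matrix.add_apply, Matrix.smul_apply,
        mul_comm, add_mul, Finset.sum_add_distrib, smul_eq_mul] using h'
    have h0 : ((∑ l, C k l * x' l) + ∑ l, (E l k * ξ 0 l + (F l k + 0 * E l k) * ξ' l)) = 0 := by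
      have := hD.unique (by rw [hconst]; exact hasDerivAt_const 0 0)
      simpa using this
    simp only [zero_mul, add_zero, Finset.sum_add_distrib] at h0
    simp only [Pi.add_apply, Pi.zero_apply, mulVec, dotProduct, transpose_apply]
    linarith
  -- differentiate the second KKT equation componentwise
  have heq2 : F *ᵥ x' + E *ᵥ x 0 = 0 := by
    funext k
    have hD : HasDerivAt
        (fun θ : ℝ => ∑ l, (F k l + θ * E k l) * x θ l)
        (∑ l, (E k l * x 0 l + (F k l + 0 * E k l) * x' l)) 0 := by
      refine HasDerivAt.fun_sum fun l _ => ?_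
      have := ((hasDerivAt_const (0:ℝ) (F k l)).add
        ((hasDerivAt_id (0:ℝ)).mul_const (E k l))).mul (hx'c l)
      simpa [Pi.add_def, Pi.mul_def] using this
    have hconst : (fun θ : ℝ => ∑ l, (F k l + θ * E k l) * x θ l) = fun _ => b k := by
      funext θ
      have h' := congrFun (hkkt θ).2 k
      simpa [mulVec, dotProduct, Matrix.add_apply, Matrix.smul_apply, smul_eq_mul] using h'
    have h0 : (∑ l, (E k l * x 0 l + (F k l + 0 * E k l) * x' l)) = 0 := by
      have := hD.unique (by rw [hconst]; exact hasDerivAt_const 0 (b k))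
      simpa using this
    simp only [zero_mul, add_zero, Finset.sum_add_distrib] at h0
    simp only [Pi.add_apply, Pi.zero_apply, mulVec, dotProduct]
    linarith
  -- symmetry of C
  have hsym : Cᵀ = C := by
    have := hC.1.eq
    rwa [conjTranspose_eq_transpose_of_trivial] at this
  -- main derivative computation
  have hmain : HasDerivAt (fun θ => ℓ (x θ)) (g ⬝ᵥ x') 0 := by
    have := hl.comp_hasDerivAt 0 hxd
    simpa [hg, Function.comp_def] using this
  have key : g ⬝ᵥ x' = ξ 0 i * xt j + ξt i * x 0 j := by
    have hg' : g = -(C *ᵥ xt + Fᵀ *ᵥ ξt) := by rw [hadj1, neg_neg]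
    have e1 : C *ᵥ x' = -(Fᵀ *ᵥ ξ' + Eᵀ *ᵥ ξ 0) := by
      have := heq1
      rw [add_assoc] at this
      linear_combination (norm := module) this
    have e2 : F *ᵥ x' = -(E *ᵥ x 0) := by
      linear_combination (norm := module) heq2
    have t1 : (C *ᵥ xt) ⬝ᵥ x' = xt ⬝ᵥ (C *ᵥ x') := by
      rw [dotProduct_comm, dotProduct_mulVec, ← mulVec_transpose, hsym, dotProduct_comm,
        dotProduct_mulVec, ← mulVec_transpose, hsym]
    have t2 : (Fᵀ *ᵥ ξt) ⬝ᵥ x' = ξt ⬝ᵥ (F *ᵥ x') := by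
      rw [dotProduct_comm, dotProduct_mulVec, vecMul_transpose, dotProduct_comm,
        dotProduct_mulVec]
    have t3 : xt ⬝ᵥ (Fᵀ *ᵥ ξ') = 0 := by
      rw [dotProduct_mulVec, vecMul_transpose, hadj2, zero_dotProduct]
    have hET : Eᵀ = single j i (1:ℝ) := by
      funext a c
      by_cases h1 : a = j <;> by_cases h2 : c = i <;>
        simp [hE, transpose_apply, Matrix.single, h1, h2, and_comm]
    have t4 : xt ⬝ᵥ (Eᵀ *ᵥ ξ 0) = ξ 0 i * xt j := by
      rw [hET, Matrix.single_mulVec]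
      simp [dotProduct, Function.update, Finset.sum_ite_eq, mul_comm]
    have t5 : ξt ⬝ᵥ (E *ᵥ x 0) = ξt i * x 0 j := by
      rw [hE, Matrix.single_mulVec]
      simp [dotProduct, Function.update, Finset.sum_ite_eq]
    rw [hg']
    rw [neg_dotProduct, add_dotProduct, t1, t2, e1, e2]
    rw [dotProduct_neg, dotProduct_add, t3, t4, dotProduct_neg, t5]
    ring
  rw [← key]
  exact hmain
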